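/- Every nonempty p-pseudoconcave subset X of a complex manifold V satisfies the maximum principle for holomorphic functions: no holomorphic function on an open subset of V admits a strict local maximum of its modulus at a point of X. -/

import Mathlib

open MeasureTheory Metric Set Filter Bornology Topology

noncomputable section

/-- `ℂⁿ` with its Euclidean structure. -/
abbrev CSp (n : ℕ) := EuclideanSpace ℂ (Fin n)

instance (n : ℕ) : MeasureSpace (CSp n) :=
  ⟨Measure.map (WithLp.toLp 2) (volume : Measure (∀ _ : Fin n, ℂ))⟩
instance (n : ℕ) : BorelSpace (CSp n) := inferInstance
/-- The union of the unbounded connected components of the complement of `K` in `ℂᵖ`. -/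
def unbddCompl {p : ℕ} (K : Set (CSp p)) : Set (CSp p) :=
  ⋃₀ {C | C ⊆ Kᶜ ∧ IsConnected C ∧ ¬Bornology.IsBounded C}

/-- `U` is relatively open in `V`. -/
def RelOpen {n : ℕ} (V U : Set (CSp n)) : Prop := ∃ O, IsOpen O ∧ U = V ∩ O

/-- `f` is holomorphic along `V` on `W ⊆ V`: near each point of `W` it extends to a
holomorphic map of a full neighbourhood in `ℂⁿ` (for `V` open this is just holomorphy on `W`;
for `V` a submanifold this is the usual notion of holomorphy on `V`). -/
def HolomorphicAlong {n q : ℕ} (V W : Set (CSp n)) (f : CSp n → CSp q) : Prop :=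
  ∀ a ∈ W, ∃ O : Set (CSp n), IsOpen O ∧ a ∈ O ∧
    ∃ g : CSp n → CSp q, DifferentiableOn ℂ g O ∧ ∀ x ∈ O ∩ V, g x = f x

/-- `X` is a `p`-pseudoconcave subset of (the complex manifold) `V`: `X` is closed in `V` and
for every relatively open `U ⊂⊂ V` and every holomorphic map `f` from a neighbourhood of the
closure of `U` (in `V`) into `ℂᵖ`, `f(X ∩ U)` avoids the unbounded component of
`ℂᵖ \ f(X ∩ ∂U)`, where `∂U = closure U \ U` is the boundary of `U` in `V`. -/
def IsPseudoconcave {n : ℕ} (p : ℕ) (V X : Set (CSp n)) : Prop :=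
  X ⊆ V ∧ (V ∩ closure X ⊆ X) ∧
  ∀ U : Set (CSp n), RelOpen V U → IsCompact (closure U) → closure U ⊆ V →
    ∀ W : Set (CSp n), RelOpen V W → closure U ⊆ W →
      ∀ f : CSp n → CSp p, HolomorphicAlong V W f →
        f '' (X ∩ U) ⊆ (unbddCompl (f '' (X ∩ (closure U \ U))))ᶜ

/-- The real rank of `ℂᵖ` is at least `2` when `p ≥ 1`. -/
lemma CSp.one_lt_rank (p : ℕ) (hp : 1 ≤ p) : 1 < Module.rank ℝ (CSp p) := by
  have h2 : Module.finrank ℝ ℂ * Module.finrank ℂ (CSp p) = Module.finrank ℝ (CSp p) :=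
    Module.finrank_mul_finrank ℝ ℂ (CSp p)
  rw [Complex.finrank_real_complex, finrank_euclideanSpace_fin] at h2
  rw [← Module.finrank_eq_rank ℝ, ← h2]
  exact_mod_cast by omega

/-- The inclusion `ℂ → ℂᵖ` in coordinate `i` as a continuous linear map. -/
def singL (p : ℕ) (i : Fin p) : ℂ →L[ℂ] CSp p :=
  LinearMap.toContinuousLinearMap
  { toFun := fun c => EuclideanSpace.single i c
    map_add' := by intro x y; ext j; simp [EuclideanSpace.single_apply]; split <;> simp
    map_smul' := by intro m x; ext j; simp [EuclideanSpace.single_apply] }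

/-- For `p ≥ 1` and `r ≥ 0`, the set `{‖z‖ > r} ⊆ ℂᵖ` is path connected. -/
lemma isPathConnected_norm_gt (p : ℕ) (hp : 1 ≤ p) (r : ℝ) (hr : 0 ≤ r) :
    IsPathConnected {z : CSp p | r < ‖z‖} := by
  set C := {z : CSp p | r < ‖z‖} with hC
  have hsph : IsPathConnected (sphere (0 : CSp p) (r + 1)) :=
    isPathConnected_sphere (CSp.one_lt_rank p hp) 0 (by linarith)
  have hsubC : sphere (0 : CSp p) (r + 1) ⊆ C := by
    intro z hz
    rw [mem_sphere_zero_iff_norm] at hz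
    simp only [hC, mem_setOf_eq, hz]; linarith
  set b : CSp p := EuclideanSpace.single ⟨0, hp⟩ ((r + 1 : ℝ) : ℂ) with hb
  have hbnorm : ‖b‖ = r + 1 := by
    rw [hb, EuclideanSpace.norm_single]
    simp only [Complex.norm_real]
    exact abs_of_nonneg (by linarith)
  have hbsph : b ∈ sphere (0 : CSp p) (r + 1) := by
    rw [mem_sphere_zero_iff_norm, hbnorm]
  refine ⟨b, hsubC hbsph, ?_⟩
  intro y hy
  have hyn : r < ‖y‖ := hy
  have hy0 : (0:ℝ) < ‖y‖ := lt_of_le_of_lt hr hyn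
  set c : ℝ := (r + 1) / ‖y‖ with hc
  have hc0 : 0 < c := div_pos (by linarith) hy0
  have hcy : c * ‖y‖ = r + 1 := div_mul_cancel₀ _ (ne_of_gt hy0)
  set y' : CSp p := c • y with hy'
  have hy'sph : y' ∈ sphere (0 : CSp p) (r + 1) := by
    rw [mem_sphere_zero_iff_norm, hy', norm_smul, Real.norm_eq_abs, abs_of_pos hc0, hcy]
  have hseg : segment ℝ y y' ⊆ C := by
    rintro z ⟨t, s, ht, hs, hts, rfl⟩
    rw [hy', smul_smul, ← add_smul]
    simp only [hC, mem_setOf_eq, norm_smul, Real.norm_eq_abs]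
    have hco : 0 ≤ t + s * c := by positivity
    rw [abs_of_nonneg hco]
    have heq : (t + s * c) * ‖y‖ = t * ‖y‖ + s * (c * ‖y‖) := by ring
    rw [heq, hcy]
    rcases eq_or_lt_of_le hs with hs0 | hs0
    · have ht1 : t = 1 := by linarith
      rw [← hs0, ht1]; simpa using hyn
    · nlinarith [mul_le_mul_of_nonneg_left hyn.le ht]
  have j1 : JoinedIn C y y' :=
    (((convex_segment y y').isPathConnected ⟨y, left_mem_segment ℝ y y'⟩).joinedIn
      y (left_mem_segment ℝ y y') y' (right_mem_segment ℝ y y')).mono hseg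
  have j2 : JoinedIn C y' b :=
    (hsph.joinedIn y' hy'sph b hbsph).mono hsubC
  exact (j1.trans j2).symm

/-- For `p ≥ 1`, the set `{‖z‖ > r} ⊆ ℂᵖ` is unbounded. -/
lemma not_isBounded_norm_gt (p : ℕ) (hp : 1 ≤ p) (r : ℝ) :
    ¬ Bornology.IsBounded {z : CSp p | r < ‖z‖} := by
  intro hb
  obtain ⟨R, hR⟩ := hb.subset_closedBall 0
  set t : ℝ := max r R + 1 with htdef
  set z : CSp p := EuclideanSpace.single ⟨0, hp⟩ ((t : ℝ) : ℂ) with hz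
  have hzn : ‖z‖ = |t| := by rw [hz, EuclideanSpace.norm_single, Complex.norm_real, Real.norm_eq_abs]
  have htle : t ≤ |t| := le_abs_self t
  have hzmem : z ∈ {z : CSp p | r < ‖z‖} := by
    simp only [mem_setOf_eq, hzn]
    have : r < t := lt_of_le_of_lt (le_max_left r R) (lt_add_one _)
    linarith
  have hzR : ‖z‖ ≤ R := mem_closedBall_zero_iff.mp (hR hzmem)
  have : R < t := lt_of_le_of_lt (le_max_right r R) (lt_add_one _)
  rw [hzn] at hzR
  linarith

/-- A nonempty `p`-pseudoconcave subset `X` of a complex manifold `V` (here an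
open subset of `ℂⁿ`) satisfies the maximum principle: no function `h` holomorphic on an open
subset `O` of `V` admits a strict local maximum of its modulus on `X` at a point `a ∈ X ∩ O`. -/
theorem pseudoconcave_maximum_principle {n : ℕ} (p : ℕ) (hp : 1 ≤ p)
    (V X : Set (CSp n)) (hV : IsOpen V) (hX : IsPseudoconcave p V X) (hne : X.Nonempty)
    (O : Set (CSp n)) (hO : IsOpen O) (hOV : O ⊆ V)
    (h : CSp n → ℂ) (hh : DifferentiableOn ℂ h O) (a : CSp n) (ha : a ∈ X ∩ O) :
    ¬ ∃ U : Set (CSp n), IsOpen U ∧ a ∈ U ∧ U ⊆ O ∧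
        ∀ z ∈ X ∩ U, z ≠ a → ‖h z‖ < ‖h a‖ := by
  rintro ⟨U, hUopen, haU, hUO, hmax⟩
  obtain ⟨haX, haO⟩ := ha
  have haV : a ∈ V := hOV haO
  obtain ⟨ε, hε, hball⟩ : ∃ ε > 0, closedBall a ε ⊆ U := by
    obtain ⟨δ, hδ, hb⟩ := Metric.isOpen_iff.1 hUopen a haU
    exact ⟨δ/2, by linarith, fun z hz =>
      hb (lt_of_le_of_lt (mem_closedBall.mp hz) (by linarith))⟩
  set B := ball a ε with hB
  set U' := V ∩ B with hU'
  have hclU' : closure U' ⊆ closedBall a ε :=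
    (closure_mono inter_subset_right).trans closure_ball_subset_closedBall
  have hclU'U : closure U' ⊆ U := hclU'.trans hball
  have hclU'V : closure U' ⊆ V := fun z hz => hOV (hUO (hclU'U hz))
  have hcpt : IsCompact (closure U') :=
    (isCompact_closedBall a ε).of_isClosed_subset isClosed_closure hclU'
  set i0 : Fin p := ⟨0, hp⟩ with hi0
  set f : CSp n → CSp p := fun z => singL p i0 (h z) with hf
  have hfdiff : DifferentiableOn ℂ f O :=
    (singL p i0).differentiable.comp_differentiableOn hh
  have hnormf : ∀ z, ‖f z‖ = ‖h z‖ := by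
    intro z
    have : f z = EuclideanSpace.single i0 (h z) := rfl
    rw [this, EuclideanSpace.norm_single]
  have hhol : HolomorphicAlong V (V ∩ O) f := fun x hx =>
    ⟨O, hO, hx.2, f, hfdiff, fun _ _ => rfl⟩
  set S := X ∩ (closure U' \ U') with hS
  set K := f '' S with hK
  have happly := hX.2.2 U' ⟨B, isOpen_ball, rfl⟩ hcpt hclU'V (V ∩ O) ⟨O, hO, rfl⟩
      (fun z hz => ⟨hclU'V hz, hUO (hclU'U hz)⟩) f hhol
  have hfa : f a ∈ f '' (X ∩ U') := ⟨a, ⟨haX, haV, mem_ball_self hε⟩, rfl⟩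
  have hnot : f a ∉ unbddCompl K := happly hfa
  apply hnot
  have hSlt : ∀ z ∈ S, ‖h z‖ < ‖h a‖ := by
    rintro z ⟨hzX, hzcl, hzU'⟩
    have hzV : z ∈ V := hclU'V hzcl
    have hzB : z ∉ B := fun hb => hzU' ⟨hzV, hb⟩
    have hz_ne : z ≠ a := by rintro rfl; exact hzB (mem_ball_self hε)
    exact hmax z ⟨hzX, hclU'U hzcl⟩ hz_ne
  rcases K.eq_empty_or_nonempty with hKe | hKne
  · refine mem_sUnion.mpr ⟨univ, ⟨?_, ?_, ?_⟩, mem_univ _⟩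
    · rw [hKe]; simp
    · exact (convex_univ.isPathConnected ⟨0, trivial⟩).isConnected
    · intro hb
      exact not_isBounded_norm_gt p hp (-1) (hb.subset (subset_univ _))
  · have hScl : IsClosed S := by
      refine isClosed_of_closure_subset fun z hz => ?_
      have h1 : z ∈ closure X := closure_mono inter_subset_left hz
      have h2 : z ∈ closure U' := by
        have := closure_mono (inter_subset_right.trans diff_subset) hz
        rwa [closure_closure] at this
      have h3 : z ∉ U' := by
        have hsub : S ⊆ U'ᶜ := fun w hw => hw.2.2
        have := closure_mono hsub hz
        rwa [(hV.inter isOpen_ball).isClosed_compl.closure_eq] at this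
      exact ⟨hX.2.1 ⟨hclU'V h2, h1⟩, h2, h3⟩
    have hScpt : IsCompact S :=
      hcpt.of_isClosed_subset hScl (fun z hz => hz.2.1)
    have hSO : S ⊆ O := fun z hz => hUO (hclU'U hz.2.1)
    have hKcpt : IsCompact K := hScpt.image_of_continuousOn (hfdiff.continuousOn.mono hSO)
    obtain ⟨w0, hw0K, hw0max⟩ := hKcpt.exists_isMaxOn hKne continuous_norm.continuousOn
    set r := ‖w0‖ with hr
    have hr0 : 0 ≤ r := norm_nonneg _
    have hrlt : r < ‖f a‖ := by
      obtain ⟨z, hzS, rfl⟩ := hw0K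
      show ‖f z‖ < ‖f a‖
      rw [hnormf, hnormf]
      exact hSlt z hzS
    refine mem_sUnion.mpr ⟨{z | r < ‖z‖}, ⟨?_,
      (isPathConnected_norm_gt p hp r hr0).isConnected,
      not_isBounded_norm_gt p hp r⟩, hrlt⟩
    intro w hw
    simp only [mem_compl_iff]
    intro hwK
    have hle : ‖w‖ ≤ r := hw0max hwK
    exact absurd hw (not_lt.mpr hle)

end
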